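/- arXiv:1411.2045 — 2 statements merged into one kernel-verified Lean document; each statement's English description precedes it below -/
import Mathlib

section
/- Let {Ê_l}_{l∈l̄} (l̄={l₁,…,l_L}) be an ensemble of estimators of a parameter E computed from T samples, satisfying conditions C.1 and C.2. Suppose the weight vector w₀ = (w₀(l₁),…,w₀(l_L)) satisfies Σ_{l∈l̄} w₀(l) = 1 and γ_{w₀}(i) := Σ_{l∈l̄} w₀(l) ψ_i(l) = 0 for every i ∈ J. Then the weighted ensemble estimator Ê_{w₀} = Σ_{l∈l̄} w₀(l) Ê_l has mean squared error E[(Ê_{w₀} − E)²] = O(1/T) as T → ∞. -/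
open MeasureTheory ProbabilityTheory Filter Asymptotics

noncomputable section

/-- **Optimally weighted ensemble estimation (Theorem 1).**
Given an ensemble of estimators `Ehat l T` (indexed by `l ∈ l̄` and the sample size `T`)
of a parameter `θ`, satisfying condition `C.1` (bias expansion
`Bias(Ê_l) = Σ_{i∈J} c_i ψ_i(l) T^{-i/(2d)} + O(1/√T)`) and condition `C.2`
(variance `Var[Ê_l] = c_v/T + o(1/T)`), if the weight vector `w₀` sums to one and
annihilates the basis functions, `γ_{w₀}(i) = Σ_l w₀(l) ψ_i(l) = 0` for all `i ∈ J`,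
then the weighted ensemble estimator has MSE `E[(Ê_{w₀} − θ)²] = O(1/T)`. -/
theorem ensemble_estimator_optimal_weights_MSE
    {Ω : Type*} [MeasurableSpace Ω] (P : Measure Ω) [IsProbabilityMeasure P]
    (L d : ℕ) (hd : 0 < d)
    (lbar : Fin L → ℝ) (hlpos : ∀ i, 0 < lbar i) (hlinj : Function.Injective lbar)
    (Ehat : Fin L → ℕ → Ω → ℝ) (θ : ℝ)
    (hL2 : ∀ l T, MemLp (Ehat l T) 2 P)
    (J : Finset ℕ) (hJcard : J.card < L)
    (hJpos : ∀ i ∈ J, 0 < i) (hJle : ∀ i ∈ J, i ≤ d)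
    (c : ℕ → ℝ) (ψ : ℕ → ℝ → ℝ)
    -- condition C.1
    (hC1 : ∀ l, (fun T : ℕ => (∫ ω, Ehat l T ω ∂P) - θ
        - ∑ i ∈ J, c i * ψ i (lbar l) * (T : ℝ) ^ (-(i : ℝ) / (2 * d)))
        =O[atTop] fun T : ℕ => 1 / Real.sqrt T)
    -- condition C.2
    (cv : ℝ)
    (hC2 : ∀ l, (fun T : ℕ => variance (Ehat l T) P - cv / T)
        =o[atTop] fun T : ℕ => 1 / (T : ℝ))
    -- the weights sum to one and zero out the lower-order bias terms
    (w₀ : Fin L → ℝ)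
    (hw₀sum : ∑ l, w₀ l = 1)
    (hw₀γ : ∀ i ∈ J, ∑ l, w₀ l * ψ i (lbar l) = 0) :
    (fun T : ℕ => ∫ ω, (∑ l, w₀ l * Ehat l T ω - θ) ^ 2 ∂P)
      =O[atTop] fun T : ℕ => 1 / (T : ℝ) := by
  classical
  set m : Fin L → ℕ → ℝ := fun l T => ∫ ω, Ehat l T ω ∂P with hm
  set B : ℕ → ℝ := fun T => ∑ l, w₀ l * (m l T - θ) with hBdef
  have hg : ∀ l T, MemLp (fun ω => Ehat l T ω - m l T) 2 P :=
    fun l T => (hL2 l T).sub (memLp_const _)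
  have hgint : ∀ l T, Integrable (fun ω => Ehat l T ω - m l T) P :=
    fun l T => (hg l T).integrable one_le_two
  have hginteg0 : ∀ l T, ∫ ω, (Ehat l T ω - m l T) ∂P = 0 := by
    intro l T
    rw [integral_sub ((hL2 l T).integrable one_le_two) (integrable_const _)]
    simp [hm]
  have hXmem : ∀ T, MemLp (fun ω => ∑ l, w₀ l * (Ehat l T ω - m l T)) 2 P :=
    fun T => memLp_finset_sum _ fun l _ => ((hg l T).const_mul _)
  have hXint : ∀ T, Integrable (fun ω => ∑ l, w₀ l * (Ehat l T ω - m l T)) P :=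
    fun T => (hXmem T).integrable one_le_two
  have hXint0 : ∀ T, ∫ ω, (∑ l, w₀ l * (Ehat l T ω - m l T)) ∂P = 0 := by
    intro T
    rw [integral_finset_sum _ fun l _ => ((hgint l T).const_mul _)]
    simp [integral_const_mul, hginteg0]
  -- key bias-variance identity
  have key : ∀ T, ∫ ω, (∑ l, w₀ l * Ehat l T ω - θ) ^ 2 ∂P
      = (∫ ω, (∑ l, w₀ l * (Ehat l T ω - m l T)) ^ 2 ∂P) + (B T) ^ 2 := by
    intro T
    have hpt : ∀ ω, ∑ l, w₀ l * Ehat l T ω - θ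
        = (∑ l, w₀ l * (Ehat l T ω - m l T)) + B T := by
      intro ω
      have h1 : (∑ l, w₀ l * (Ehat l T ω - m l T)) + B T
          = ∑ l, w₀ l * (Ehat l T ω - θ) := by
        rw [hBdef, ← Finset.sum_add_distrib]
        exact Finset.sum_congr rfl fun l _ => by ring
      rw [h1]
      simp only [mul_sub, Finset.sum_sub_distrib, ← Finset.sum_mul, hw₀sum, one_mul]
    calc ∫ ω, (∑ l, w₀ l * Ehat l T ω - θ) ^ 2 ∂P
        = ∫ ω, ((∑ l, w₀ l * (Ehat l T ω - m l T)) ^ 2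
            + ((2 * B T) * (∑ l, w₀ l * (Ehat l T ω - m l T)) + (B T) ^ 2)) ∂P := by
          congr 1; funext ω; rw [hpt ω]; ring
      _ = (∫ ω, (∑ l, w₀ l * (Ehat l T ω - m l T)) ^ 2 ∂P) + (B T) ^ 2 := by
          have i1 : Integrable (fun ω => (∑ l, w₀ l * (Ehat l T ω - m l T)) ^ 2) P :=
            (hXmem T).integrable_sq
          have i2 : Integrable
              (fun ω => (2 * B T) * (∑ l, w₀ l * (Ehat l T ω - m l T))) P :=
            (hXint T).const_mul _
          have i3 : Integrable (fun ω => (2 * B T) * (∑ l, w₀ l * (Ehat l T ω - m l T))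
              + (B T) ^ 2) P := i2.add (integrable_const _)
          rw [integral_add i1 i3, integral_add i2 (integrable_const _),
            integral_const_mul, hXint0, integral_const]
          simp
  -- variance identity
  have hvar : ∀ l T, ∫ ω, (Ehat l T ω - m l T) ^ 2 ∂P = variance (Ehat l T) P := by
    intro l T
    rw [variance_eq_integral (hL2 l T).aemeasurable]
  -- Cauchy-Schwarz bound for the variance of the weighted sum
  have hCS : ∀ T, ∫ ω, (∑ l, w₀ l * (Ehat l T ω - m l T)) ^ 2 ∂P
      ≤ (L : ℝ) * ∑ l, (w₀ l) ^ 2 * variance (Ehat l T) P := by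
    intro T
    have hle : ∀ ω, (∑ l, w₀ l * (Ehat l T ω - m l T)) ^ 2
        ≤ (L : ℝ) * ∑ l, (w₀ l * (Ehat l T ω - m l T)) ^ 2 := by
      intro ω
      have := sq_sum_le_card_mul_sum_sq (s := Finset.univ)
        (f := fun l => w₀ l * (Ehat l T ω - m l T))
      simpa using this
    have hint2 : Integrable (fun ω => ∑ l, (w₀ l * (Ehat l T ω - m l T)) ^ 2) P :=
      integrable_finset_sum _ fun l _ => ((hg l T).const_mul _).integrable_sq
    calc ∫ ω, (∑ l, w₀ l * (Ehat l T ω - m l T)) ^ 2 ∂P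
        ≤ ∫ ω, (L : ℝ) * ∑ l, (w₀ l * (Ehat l T ω - m l T)) ^ 2 ∂P :=
          integral_mono ((hXmem T).integrable_sq) (hint2.const_mul _) hle
      _ = (L : ℝ) * ∑ l, (w₀ l) ^ 2 * variance (Ehat l T) P := by
          rw [integral_const_mul,
            integral_finset_sum _ fun l _ => ((hg l T).const_mul _).integrable_sq]
          congr 1
          refine Finset.sum_congr rfl fun l _ => ?_
          rw [← hvar l T, ← integral_const_mul]
          congr 1; funext ω; ring
  -- bias is O(1/sqrt T)
  have hBO : (fun T : ℕ => B T) =O[atTop] fun T : ℕ => 1 / Real.sqrt T := by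
    have h0 : ∀ T : ℕ, B T = ∑ l, w₀ l * ((m l T - θ)
        - ∑ i ∈ J, c i * ψ i (lbar l) * (T : ℝ) ^ (-(i : ℝ) / (2 * d))) := by
      intro T
      have hz : ∑ l, w₀ l * ∑ i ∈ J, c i * ψ i (lbar l) * (T : ℝ) ^ (-(i : ℝ) / (2 * d)) = 0 := by
        simp_rw [Finset.mul_sum]
        rw [Finset.sum_comm]
        refine Finset.sum_eq_zero fun i hi => ?_
        have h1 : ∑ l, w₀ l * (c i * ψ i (lbar l) * (T : ℝ) ^ (-(i : ℝ) / (2 * d)))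
            = (c i * (T : ℝ) ^ (-(i : ℝ) / (2 * d))) * ∑ l, w₀ l * ψ i (lbar l) := by
          rw [Finset.mul_sum]
          exact Finset.sum_congr rfl fun l _ => by ring
        rw [h1, hw₀γ i hi, mul_zero]
      rw [hBdef]
      simp only [mul_sub, Finset.sum_sub_distrib]
      rw [hz, sub_zero]
    have h := Asymptotics.IsBigO.sum (s := Finset.univ)
      (fun l (_ : l ∈ Finset.univ) => ((hC1 l).const_mul_left (w₀ l)))
    exact h.congr' (Eventually.of_forall fun T => by rw [Finset.sum_apply]; exact (h0 T).symm) EventuallyEq.rfl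
  have hB2 : (fun T : ℕ => (B T) ^ 2) =O[atTop] fun T : ℕ => 1 / (T : ℝ) := by
    refine (hBO.mul hBO).congr (fun T => (sq (B T)).symm) fun T => ?_
    rw [div_mul_div_comm, one_mul, Real.mul_self_sqrt (Nat.cast_nonneg T)]
  -- variances are O(1/T)
  have hVO : ∀ l, (fun T : ℕ => variance (Ehat l T) P) =O[atTop]
      fun T : ℕ => 1 / (T : ℝ) := by
    intro l
    have h2 : (fun T : ℕ => cv / (T : ℝ)) =O[atTop] fun T : ℕ => 1 / (T : ℝ) := by
      have := (isBigO_refl (fun T : ℕ => 1 / (T : ℝ)) atTop).const_mul_left cv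
      refine this.congr (fun T => ?_) fun T => rfl
      rw [mul_one_div]
    have := (hC2 l).isBigO.add h2
    refine this.congr (fun T => ?_) fun T => rfl
    ring
  have hsumO : (fun T : ℕ => (L : ℝ) * ∑ l, (w₀ l) ^ 2 * variance (Ehat l T) P
      + (B T) ^ 2) =O[atTop] fun T : ℕ => 1 / (T : ℝ) := by
    have hS : (fun T : ℕ => ∑ l, (w₀ l) ^ 2 * variance (Ehat l T) P) =O[atTop]
        fun T : ℕ => 1 / (T : ℝ) :=
      (Asymptotics.IsBigO.sum (s := Finset.univ) fun l _ => (hVO l).const_mul_left ((w₀ l) ^ 2)).congr_left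
        fun T => by rw [Finset.sum_apply]
    exact (hS.const_mul_left _).add hB2
  refine IsBigO.trans ?_ hsumO
  refine isBigO_of_le atTop fun T => ?_
  have hMSEnn : 0 ≤ ∫ ω, (∑ l, w₀ l * Ehat l T ω - θ) ^ 2 ∂P :=
    integral_nonneg fun ω => sq_nonneg _
  have hRnn : 0 ≤ (L : ℝ) * ∑ l, (w₀ l) ^ 2 * variance (Ehat l T) P + (B T) ^ 2 := by
    have : 0 ≤ ∑ l, (w₀ l) ^ 2 * variance (Ehat l T) P :=
      Finset.sum_nonneg fun l _ => mul_nonneg (sq_nonneg _) (variance_nonneg _ _)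
    positivity
  rw [Real.norm_eq_abs, Real.norm_eq_abs, abs_of_nonneg hMSEnn, abs_of_nonneg hRnn,
    key T]
  exact add_le_add_left (hCS T) _
end
end

section
/- Let {Ê_l}_{l∈l̄} be an ensemble of estimators of a parameter E computed from T samples, satisfying conditions C.1 and C.2. Fix ε > 0 and η > 0, and suppose the weight vector w satisfies Σ_{l∈l̄} w(l) = 1, ‖w‖₂² ≤ η, and |γ_w(i)| ≤ ε T^{i/(2d) − 1/2} for every i ∈ J, where γ_w(i) = Σ_{l∈l̄} w(l) ψ_i(l). Then the weighted ensemble estimator Ê_w = Σ_{l∈l̄} w(l) Ê_l has mean squared error E[(Ê_w − E)²] = O(1/T) as T → ∞; that is, relaxing the exact constraints γ_w(i)=0 to decay at rate O(1/√T) retains the parametric MSE rate O(1/T). -/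
open MeasureTheory ProbabilityTheory Filter Asymptotics

noncomputable section

/-- **Relaxed optimally weighted ensemble estimation.**
Given an ensemble of estimators `Ehat l T` of a parameter `θ` satisfying conditions
`C.1` and `C.2`, if for each sample size `T` the weight vector `w T` sums to one, has
`‖w‖₂² ≤ η`, and satisfies the relaxed constraints
`|γ_w(i)| ≤ ε T^(i/(2d) - 1/2)` for all `i ∈ J`, then the weighted ensemble estimator
retains the parametric MSE rate: `E[(Ê_w − θ)²] = O(1/T)`. -/
theorem ensemble_estimator_relaxed_weights_MSE
    {Ω : Type*} [MeasurableSpace Ω] (P : Measure Ω) [IsProbabilityMeasure P]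
    (L d : ℕ) (hd : 0 < d)
    (lbar : Fin L → ℝ) (hlpos : ∀ i, 0 < lbar i) (hlinj : Function.Injective lbar)
    (Ehat : Fin L → ℕ → Ω → ℝ) (θ : ℝ)
    (hL2 : ∀ l T, MemLp (Ehat l T) 2 P)
    (J : Finset ℕ) (hJcard : J.card < L)
    (hJpos : ∀ i ∈ J, 0 < i) (hJle : ∀ i ∈ J, i ≤ d)
    (c : ℕ → ℝ) (ψ : ℕ → ℝ → ℝ)
    -- condition C.1
    (hC1 : ∀ l, (fun T : ℕ => (∫ ω, Ehat l T ω ∂P) - θ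
        - ∑ i ∈ J, c i * ψ i (lbar l) * (T : ℝ) ^ (-(i : ℝ) / (2 * d)))
        =O[atTop] fun T : ℕ => 1 / Real.sqrt T)
    -- condition C.2
    (cv : ℝ)
    (hC2 : ∀ l, (fun T : ℕ => variance (Ehat l T) P - cv / T)
        =o[atTop] fun T : ℕ => 1 / (T : ℝ))
    -- relaxed weight constraints
    (ε η : ℝ) (hε : 0 < ε) (hη : 0 < η)
    (w : ℕ → Fin L → ℝ)
    (hwsum : ∀ T, ∑ l, w T l = 1)
    (hwnorm : ∀ T, ∑ l, (w T l) ^ 2 ≤ η)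
    (hwγ : ∀ i ∈ J, ∀ T : ℕ, 1 ≤ T →
        |∑ l, w T l * ψ i (lbar l)| ≤ ε * (T : ℝ) ^ ((i : ℝ) / (2 * d) - 1 / 2)) :
    (fun T : ℕ => ∫ ω, (∑ l, w T l * Ehat l T ω - θ) ^ 2 ∂P)
      =O[atTop] fun T : ℕ => 1 / (T : ℝ) := by
  classical
  set μl : Fin L → ℕ → ℝ := fun l T => ∫ ω, Ehat l T ω ∂P with hμl
  set b : ℕ → ℝ := fun T => ∑ l, w T l * (μl l T - θ) with hbdef
  have hwsq : ∀ T l, (w T l) ^ 2 ≤ η := fun T l =>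
    le_trans (Finset.single_le_sum (fun i _ => sq_nonneg (w T i)) (Finset.mem_univ l)) (hwnorm T)
  have hwabs : ∀ T l, |w T l| ≤ Real.sqrt η := by
    intro T l
    rw [← Real.sqrt_sq_eq_abs]
    exact Real.sqrt_le_sqrt (hwsq T l)
  -- variance part
  have hVarO : ∀ l : Fin L, (fun T : ℕ => variance (Ehat l T) P) =O[atTop]
      fun T : ℕ => 1 / (T : ℝ) := by
    intro l
    have h1 : (fun T : ℕ => cv / (T : ℝ)) =O[atTop] fun T : ℕ => 1 / (T : ℝ) := by
      simpa [div_eq_mul_inv, one_div] using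
        (isBigO_refl (fun T : ℕ => ((T : ℝ))⁻¹) atTop).const_mul_left cv
    have h2 := (hC2 l).isBigO.add h1
    simpa using h2
  have hSvar : (fun T : ℕ => ∑ l, (w T l) ^ 2 * variance (Ehat l T) P) =O[atTop]
      fun T : ℕ => 1 / (T : ℝ) := by
    apply IsBigO.fun_sum
    intro l _
    refine (IsBigO.of_bound η ?_).trans (hVarO l)
    filter_upwards with T
    rw [Real.norm_eq_abs, Real.norm_eq_abs, abs_mul, abs_of_nonneg (sq_nonneg _)]
    exact mul_le_mul_of_nonneg_right (hwsq T l) (abs_nonneg _)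
  -- bias part
  have hγO : ∀ i ∈ J, (fun T : ℕ =>
      c i * (∑ l, w T l * ψ i (lbar l)) * (T : ℝ) ^ (-(i : ℝ) / (2 * d)))
      =O[atTop] fun T : ℕ => 1 / Real.sqrt T := by
    intro i hi
    apply IsBigO.of_bound (|c i| * ε)
    filter_upwards [eventually_ge_atTop 1] with T hT
    have hT0 : (0 : ℝ) < (T : ℝ) := by exact_mod_cast hT
    have h1 := hwγ i hi T hT
    have hrpow : (T : ℝ) ^ ((i : ℝ) / (2 * d) - 1 / 2) * (T : ℝ) ^ (-(i : ℝ) / (2 * d))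
        = 1 / Real.sqrt T := by
      rw [← Real.rpow_add hT0]
      have he : (i : ℝ) / (2 * d) - 1 / 2 + -(i : ℝ) / (2 * d) = -(1 / 2) := by ring
      rw [he, Real.rpow_neg hT0.le, ← Real.sqrt_eq_rpow, one_div]
    have hrnn : (0 : ℝ) ≤ (T : ℝ) ^ (-(i : ℝ) / (2 * d)) := Real.rpow_nonneg hT0.le _
    calc ‖c i * (∑ l, w T l * ψ i (lbar l)) * (T : ℝ) ^ (-(i : ℝ) / (2 * d))‖
        = |c i| * |∑ l, w T l * ψ i (lbar l)| * (T : ℝ) ^ (-(i : ℝ) / (2 * d)) := by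
          rw [Real.norm_eq_abs, abs_mul, abs_mul, abs_of_nonneg hrnn]
      _ ≤ |c i| * (ε * (T : ℝ) ^ ((i : ℝ) / (2 * d) - 1 / 2))
            * (T : ℝ) ^ (-(i : ℝ) / (2 * d)) := by
          gcongr
      _ = |c i| * ε * ((T : ℝ) ^ ((i : ℝ) / (2 * d) - 1 / 2)
            * (T : ℝ) ^ (-(i : ℝ) / (2 * d))) := by ring
      _ = |c i| * ε * (1 / Real.sqrt T) := by rw [hrpow]
      _ ≤ |c i| * ε * ‖1 / Real.sqrt (T : ℕ)‖ := by
          rw [Real.norm_eq_abs]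
          exact mul_le_mul_of_nonneg_left (le_abs_self _) (by positivity)
  have hrem : ∀ l : Fin L, (fun T : ℕ => w T l * (μl l T - θ
      - ∑ i ∈ J, c i * ψ i (lbar l) * (T : ℝ) ^ (-(i : ℝ) / (2 * d))))
      =O[atTop] fun T : ℕ => 1 / Real.sqrt T := by
    intro l
    refine (IsBigO.of_bound (Real.sqrt η) ?_).trans (hC1 l)
    filter_upwards with T
    rw [Real.norm_eq_abs, Real.norm_eq_abs, abs_mul]
    exact mul_le_mul_of_nonneg_right (hwabs T l) (abs_nonneg _)
  have hbias : b =O[atTop] fun T : ℕ => 1 / Real.sqrt T := by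
    have hdecomp : b = fun T : ℕ =>
        (∑ i ∈ J, c i * (∑ l, w T l * ψ i (lbar l)) * (T : ℝ) ^ (-(i : ℝ) / (2 * d)))
        + ∑ l, w T l * (μl l T - θ
            - ∑ i ∈ J, c i * ψ i (lbar l) * (T : ℝ) ^ (-(i : ℝ) / (2 * d))) := by
      funext T
      simp only [hbdef]
      have hsplit : ∀ l : Fin L, w T l * (μl l T - θ)
          = w T l * (∑ i ∈ J, c i * ψ i (lbar l) * (T : ℝ) ^ (-(i : ℝ) / (2 * d)))
            + w T l * (μl l T - θ
              - ∑ i ∈ J, c i * ψ i (lbar l) * (T : ℝ) ^ (-(i : ℝ) / (2 * d))) :=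
        fun l => by ring
      rw [Finset.sum_congr rfl fun l _ => hsplit l, Finset.sum_add_distrib]
      congr 1
      simp_rw [Finset.mul_sum]
      rw [Finset.sum_comm]
      refine Finset.sum_congr rfl fun i _ => ?_
      rw [Finset.sum_mul]
      exact Finset.sum_congr rfl fun l _ => by ring
    rw [hdecomp]
    exact (IsBigO.fun_sum fun i hi => hγO i hi).add (IsBigO.fun_sum fun l _ => hrem l)
  have hb2 : (fun T : ℕ => (b T) ^ 2) =O[atTop] fun T : ℕ => 1 / (T : ℝ) := by
    have h2 := hbias.mul hbias
    have heq : (fun T : ℕ => 1 / Real.sqrt T * (1 / Real.sqrt T)) = fun T : ℕ => 1 / (T : ℝ) := by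
      funext T
      rw [div_mul_div_comm, one_mul, Real.mul_self_sqrt (Nat.cast_nonneg T)]
    rw [heq] at h2
    simpa [pow_two] using h2
  -- main integral bound
  have hmem : ∀ T : ℕ, MemLp (fun ω => ∑ l, w T l * Ehat l T ω - θ) 2 P := by
    intro T
    have := (memLp_finset_sum' Finset.univ fun (l : Fin L) (_ : l ∈ Finset.univ) =>
      (hL2 l T).const_mul (w T l)).sub (memLp_const θ)
    convert this using 1
    funext ω
    simp [Finset.sum_apply]
  have key : ∀ T : ℕ, ∫ ω, (∑ l, w T l * Ehat l T ω - θ) ^ 2 ∂P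
      ≤ 2 * L * (∑ l, (w T l) ^ 2 * variance (Ehat l T) P) + 2 * (b T) ^ 2 := by
    intro T
    set f : Fin L → Ω → ℝ := fun l ω => w T l * (Ehat l T ω - μl l T) with hf
    have hfmem : ∀ l, MemLp (f l) 2 P :=
      fun l => ((hL2 l T).sub (memLp_const (μl l T))).const_mul (w T l)
    have hint_f2 : ∀ l, Integrable (fun ω => (f l ω) ^ 2) P := fun l => (hfmem l).integrable_sq
    have hintS : Integrable (fun ω => ∑ l, (f l ω) ^ 2) P :=
      integrable_finset_sum _ fun l _ => hint_f2 l
    have hptid : ∀ ω, ∑ l, w T l * Ehat l T ω - θ = (∑ l, f l ω) + b T := by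
      intro ω
      have h1 : (∑ l, f l ω) + b T = ∑ l, (w T l * Ehat l T ω - w T l * θ) := by
        simp only [hbdef, hf]
        rw [← Finset.sum_add_distrib]
        exact Finset.sum_congr rfl fun l _ => by ring
      have h2 : ∑ l, (w T l * Ehat l T ω - w T l * θ) = ∑ l, w T l * Ehat l T ω - θ := by
        rw [Finset.sum_sub_distrib, ← Finset.sum_mul, hwsum T, one_mul]
      exact (h1.trans h2).symm
    have hpt : ∀ ω, (∑ l, w T l * Ehat l T ω - θ) ^ 2
        ≤ 2 * L * (∑ l, (f l ω) ^ 2) + 2 * (b T) ^ 2 := by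
      intro ω
      rw [hptid ω]
      have h3 : ((∑ l, f l ω) + b T) ^ 2 ≤ 2 * (∑ l, f l ω) ^ 2 + 2 * (b T) ^ 2 := by
        nlinarith [sq_nonneg ((∑ l, f l ω) - b T)]
      have h4 : (∑ l, f l ω) ^ 2 ≤ (L : ℝ) * ∑ l, (f l ω) ^ 2 := by
        simpa using sq_sum_le_card_mul_sum_sq (s := Finset.univ) (f := fun l => f l ω)
      nlinarith
    have hIL : Integrable (fun ω => (∑ l, w T l * Ehat l T ω - θ) ^ 2) P :=
      (hmem T).integrable_sq
    have hIR : Integrable (fun ω => 2 * (L : ℝ) * (∑ l, (f l ω) ^ 2) + 2 * (b T) ^ 2) P :=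
      (hintS.const_mul _).add (integrable_const _)
    have hf2var : ∀ l : Fin L, ∫ ω, (f l ω) ^ 2 ∂P = (w T l) ^ 2 * variance (Ehat l T) P := by
      intro l
      have hv : variance (Ehat l T) P = ∫ ω, (Ehat l T ω - μl l T) ^ 2 ∂P := by
        rw [variance_eq_integral (hL2 l T).aemeasurable]
      rw [hv, ← integral_const_mul]
      exact integral_congr_ae (Filter.Eventually.of_forall fun ω => by simp only [hf]; ring)
    calc ∫ ω, (∑ l, w T l * Ehat l T ω - θ) ^ 2 ∂P
        ≤ ∫ ω, (2 * (L : ℝ) * (∑ l, (f l ω) ^ 2) + 2 * (b T) ^ 2) ∂P :=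
          integral_mono hIL hIR hpt
      _ = 2 * L * (∑ l, ∫ ω, (f l ω) ^ 2 ∂P) + 2 * (b T) ^ 2 := by
          rw [integral_add (hintS.const_mul _) (integrable_const _), integral_const,
            integral_const_mul, integral_finset_sum _ fun l _ => hint_f2 l]
          simp
      _ = 2 * L * (∑ l, (w T l) ^ 2 * variance (Ehat l T) P) + 2 * (b T) ^ 2 := by
          rw [Finset.sum_congr rfl fun l _ => hf2var l]
  -- assemble
  have hRHS : (fun T : ℕ => 2 * (L : ℝ) * (∑ l, (w T l) ^ 2 * variance (Ehat l T) P)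
      + 2 * (b T) ^ 2) =O[atTop] fun T : ℕ => 1 / (T : ℝ) :=
    (hSvar.const_mul_left _).add (hb2.const_mul_left _)
  refine (IsBigO.of_bound 1 ?_).trans hRHS
  filter_upwards with T
  rw [one_mul, Real.norm_eq_abs, Real.norm_eq_abs,
    abs_of_nonneg (integral_nonneg fun ω => sq_nonneg _)]
  exact (key T).trans (le_abs_self _)
end
end
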